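/- Let π = ⟨x, y | y x y⁻¹ = x⁻¹⟩ be the Klein bottle group, and let φ: π → π be an endomorphism with φ(x) = x^q and φ(y) = y^r x^ℓ for integers q, r, ℓ. Then GR(φ) = max{|q|, |r|}. -/

import Mathlib

open Filter Topology

/-- Word length of `g` with respect to the (symmetrized) generating set `S`. -/
noncomputable def wordLength {G : Type*} [Group G] (S : Set G) (g : G) : ℕ :=
  sInf {n : ℕ | ∃ w : List G, w.length = n ∧ (∀ x ∈ w, x ∈ S ∨ x⁻¹ ∈ S) ∧ w.prod = g}

/-- `L_k(f, S) = max_{s ∈ S} L(f^k(s), S)`. -/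
noncomputable def Lk {G : Type*} [Group G] (S : Finset G) (f : G → G) (k : ℕ) : ℕ :=
  S.sup fun s => wordLength (S : Set G) (f^[k] s)

/-- The growth rate `GR(f) = inf_{k ≥ 1} L_k(f,S)^{1/k}` (which equals
`lim_{k→∞} L_k(f,S)^{1/k}`). -/
noncomputable def GR {G : Type*} [Group G] (S : Finset G) (f : G → G) : ℝ :=
  ⨅ k : ℕ+, (Lk S f k : ℝ) ^ (((k : ℕ) : ℝ))⁻¹

/-- `f` is eventually trivial if some iterate is the trivial endomorphism. -/
def EventuallyTrivial {G : Type*} [Group G] (f : G → G) : Prop :=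
  ∃ N : ℕ, 0 < N ∧ ∀ g, f^[N] g = 1

/-- The single relator `y x y⁻¹ x` of the Klein bottle group `⟨x, y | y x y⁻¹ = x⁻¹⟩`,
with `x` the generator `0` and `y` the generator `1`. -/
def kleinRels : Set (FreeGroup (Fin 2)) :=
  {FreeGroup.of 1 * FreeGroup.of 0 * (FreeGroup.of 1)⁻¹ * FreeGroup.of 0}

/-- The Klein bottle group `π = ⟨x, y | y x y⁻¹ = x⁻¹⟩`. -/
abbrev KleinBottleGroup := PresentedGroup kleinRels


namespace WL

variable {G : Type*} [Group G] {H : Type*} [Group H]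

def Valid (S : Set G) (w : List G) : Prop := ∀ x ∈ w, x ∈ S ∨ x⁻¹ ∈ S

def wset (S : Set G) (g : G) : Set ℕ :=
  {n : ℕ | ∃ w : List G, w.length = n ∧ Valid S w ∧ w.prod = g}

lemma wordLength_eq (S : Set G) (g : G) : wordLength S g = sInf (wset S g) := rfl

def Reach (S : Set G) (g : G) : Prop := ∃ w : List G, Valid S w ∧ w.prod = g

lemma reach_iff_nonempty {S : Set G} {g : G} : Reach S g ↔ (wset S g).Nonempty := by
  constructor
  · rintro ⟨w, hw, hp⟩; exact ⟨w.length, w, rfl, hw, hp⟩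
  · rintro ⟨n, w, _, hw, hp⟩; exact ⟨w, hw, hp⟩

lemma reach_of_closure {S : Set G} (hS : Subgroup.closure S = ⊤) (g : G) : Reach S g := by
  have hg : g ∈ Subgroup.closure S := hS ▸ Subgroup.mem_top g
  have hg' : g ∈ (Subgroup.closure S).toSubmonoid := hg
  rw [Subgroup.closure_toSubmonoid] at hg'
  obtain ⟨w, hw, hp⟩ := Submonoid.exists_list_of_mem_closure hg'
  refine ⟨w, fun x hx => ?_, hp⟩
  rcases hw x hx with h | h
  · exact Or.inl h
  · exact Or.inr (Set.mem_inv.mp h)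

lemma wordLength_le {S : Set G} {g : G} {w : List G} (hw : Valid S w) (hp : w.prod = g) :
    wordLength S g ≤ w.length :=
  Nat.sInf_le ⟨w, rfl, hw, hp⟩

lemma exists_min_word {S : Set G} {g : G} (h : Reach S g) :
    ∃ w : List G, Valid S w ∧ w.prod = g ∧ w.length = wordLength S g := by
  have := Nat.sInf_mem (reach_iff_nonempty.mp h)
  obtain ⟨w, hl, hw, hp⟩ := this
  exact ⟨w, hw, hp, hl⟩

lemma wordLength_one (S : Set G) : wordLength S (1 : G) = 0 :=
  Nat.le_zero.mp (wordLength_le (w := []) (fun x hx => by cases hx) (by simp))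

lemma eq_one_of_wordLength_eq_zero {S : Set G} {g : G} (h : Reach S g)
    (h0 : wordLength S g = 0) : g = 1 := by
  obtain ⟨w, _, hp, hl⟩ := exists_min_word h
  rw [h0, List.length_eq_zero_iff] at hl
  subst hl; simpa using hp.symm

lemma one_le_wordLength {S : Set G} {g : G} (h : Reach S g) (hg : g ≠ 1) :
    1 ≤ wordLength S g := by
  by_contra hlt
  exact hg (eq_one_of_wordLength_eq_zero h (by omega))

lemma valid_inv_word {S : Set G} {w : List G} (hw : Valid S w) :
    Valid S ((w.map fun y => y⁻¹).reverse) := by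
  intro y hy
  simp only [List.mem_reverse, List.mem_map] at hy
  obtain ⟨z, hz, rfl⟩ := hy
  rcases hw z hz with h | h
  · exact Or.inr (by simpa using h)
  · exact Or.inl h

lemma wordLength_inv_le {S : Set G} {g : G} (h : Reach S g) :
    wordLength S g⁻¹ ≤ wordLength S g := by
  obtain ⟨w, hw, hp, hl⟩ := exists_min_word h
  have hpr : ((w.map fun y => y⁻¹).reverse).prod = g⁻¹ := by
    rw [← List.prod_inv_reverse, hp]
  calc wordLength S g⁻¹ ≤ ((w.map fun y => y⁻¹).reverse).length :=
        wordLength_le (valid_inv_word hw) hpr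
    _ = w.length := by simp
    _ = _ := hl

lemma wordLength_mul_le {S : Set G} {g h : G} (h1 : Reach S g) (h2 : Reach S h) :
    wordLength S (g * h) ≤ wordLength S g + wordLength S h := by
  obtain ⟨w1, hv1, hp1, hl1⟩ := exists_min_word h1
  obtain ⟨w2, hv2, hp2, hl2⟩ := exists_min_word h2
  have hv : Valid S (w1 ++ w2) := by
    intro x hx; rcases List.mem_append.mp hx with h | h
    exacts [hv1 x h, hv2 x h]
  have hp : (w1 ++ w2).prod = g * h := by rw [List.prod_append, hp1, hp2]
  calc wordLength S (g * h) ≤ (w1 ++ w2).length := wordLength_le hv hp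
    _ = _ := by rw [List.length_append, hl1, hl2]

/-- Pushing lemma. -/
lemma push {S : Set G} {T : Set H} {C : ℕ} (f : G →* H) (hT : ∀ x : H, Reach T x)
    (hC : ∀ s ∈ S, wordLength T (f s) ≤ C) :
    ∀ w : List G, Valid S w → wordLength T (f w.prod) ≤ C * w.length := by
  have hCinv : ∀ x : G, x ∈ S ∨ x⁻¹ ∈ S → wordLength T (f x) ≤ C := by
    rintro x (hx | hx)
    · exact hC x hx
    · have h1 : wordLength T (f x⁻¹) ≤ C := hC _ hx
      have h2 : wordLength T ((f x⁻¹)⁻¹) ≤ wordLength T (f x⁻¹) := wordLength_inv_le (hT _)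
      simpa using h2.trans h1
  intro w hw
  induction w with
  | nil => simp [wordLength_one]
  | cons a w ih =>
    have ha : wordLength T (f a) ≤ C := hCinv a (hw a (by simp))
    have hw' : Valid S w := fun x hx => hw x (by simp [hx])
    have ihw := ih hw'
    have hmul : wordLength T (f (a :: w).prod)
        ≤ wordLength T (f a) + wordLength T (f w.prod) := by
      rw [List.prod_cons, map_mul]
      exact wordLength_mul_le (hT _) (hT _)
    calc wordLength T (f (a :: w).prod) ≤ wordLength T (f a) + wordLength T (f w.prod) := hmul
      _ ≤ C + C * w.length := Nat.add_le_add ha ihw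
      _ = C * (a :: w).length := by simp [List.length_cons, Nat.mul_add, Nat.add_comm]

/-- Main comparison: `L_T(f g) ≤ C * L_S(g)` when generators of `S` push with constant `C`. -/
lemma wordLength_hom_le {S : Set G} {T : Set H} {C : ℕ} (f : G →* H)
    (hT : ∀ x : H, Reach T x) (hSg : ∀ x : G, Reach S x)
    (hC : ∀ s ∈ S, wordLength T (f s) ≤ C) (g : G) :
    wordLength T (f g) ≤ C * wordLength S g := by
  obtain ⟨w, hw, hp, hl⟩ := exists_min_word (hSg g)
  calc wordLength T (f g) = wordLength T (f w.prod) := by rw [hp]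
    _ ≤ C * w.length := push f hT hC w hw
    _ = C * wordLength S g := by rw [hl]

lemma wordLength_zpow_le {S : Set G} {g : G} (h : ∀ x : G, Reach S x) (n : ℤ) :
    wordLength S (g ^ n) ≤ n.natAbs * wordLength S g := by
  induction n using Int.induction_on with
  | zero => simp [wordLength_one]
  | succ k ih =>
    have : g ^ ((k : ℤ) + 1) = g ^ (k : ℤ) * g := by rw [zpow_add_one]
    rw [this]
    calc wordLength S (g ^ (k:ℤ) * g) ≤ wordLength S (g ^ (k:ℤ)) + wordLength S g :=
          wordLength_mul_le (h _) (h _)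
      _ ≤ ((k:ℤ) + 1).natAbs * wordLength S g := by
          have h1 : (k:ℤ).natAbs = k := by omega
          have h2 : ((k:ℤ)+1).natAbs = k + 1 := by omega
          rw [h1] at ih; rw [h2]
          have : (k+1) * wordLength S g = k * wordLength S g + wordLength S g := by ring
          omega
  | pred k ih =>
    have : g ^ (-(k : ℤ) - 1) = g ^ (-(k : ℤ)) * g⁻¹ := by
      rw [sub_eq_add_neg, zpow_add, zpow_neg_one]
    rw [this]
    have hinv : wordLength S g⁻¹ ≤ wordLength S g := wordLength_inv_le (h _)
    calc wordLength S (g ^ (-(k:ℤ)) * g⁻¹)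
        ≤ wordLength S (g ^ (-(k:ℤ))) + wordLength S g⁻¹ := wordLength_mul_le (h _) (h _)
      _ ≤ (-(k:ℤ) - 1).natAbs * wordLength S g := by
          have h1 : (-(k:ℤ)).natAbs = k := by omega
          have h2 : (-(k:ℤ)-1).natAbs = k + 1 := by omega
          rw [h1] at ih; rw [h2]
          have : (k+1) * wordLength S g = k * wordLength S g + wordLength S g := by ring
          omega

end WL


/-- Concrete model of the Klein bottle group: pairs `(a, b)` representing `y^a x^b`. -/
@[ext] structure KB where
  a : ℤ
  b : ℤ

namespace KB

instance : Group KB where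
  mul g h := ⟨g.a + h.a, (h.a.negOnePow : ℤ) * g.b + h.b⟩
  one := ⟨0, 0⟩
  inv g := ⟨-g.a, -((g.a.negOnePow : ℤ) * g.b)⟩
  mul_assoc g h i := by
    ext
    · show (g.a + h.a) + i.a = g.a + (h.a + i.a); ring
    · show (i.a.negOnePow : ℤ) * ((h.a.negOnePow : ℤ) * g.b + h.b) + i.b
          = ((h.a + i.a).negOnePow : ℤ) * g.b + ((i.a.negOnePow : ℤ) * h.b + i.b)
      rw [Int.negOnePow_add, Units.val_mul]; ring
  one_mul g := by
    ext
    · show (0 : ℤ) + g.a = g.a; ring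
    · show (g.a.negOnePow : ℤ) * 0 + g.b = g.b; ring
  mul_one g := by
    ext
    · show g.a + (0 : ℤ) = g.a; ring
    · show ((0:ℤ).negOnePow : ℤ) * g.b + 0 = g.b; simp
  inv_mul_cancel g := by
    ext
    · show -g.a + g.a = (0 : ℤ); ring
    · show (g.a.negOnePow : ℤ) * -((g.a.negOnePow : ℤ) * g.b) + g.b = (0 : ℤ)
      have h1 : (g.a.negOnePow : ℤ) * (g.a.negOnePow : ℤ) = 1 := by
        rw [← Units.val_mul, ← Int.negOnePow_add]
        rw [Int.negOnePow_even _ ⟨g.a, by ring⟩]; rfl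
      linear_combination (-g.b) * h1

lemma mul_def (g h : KB) : g * h = ⟨g.a + h.a, (h.a.negOnePow : ℤ) * g.b + h.b⟩ := rfl
lemma one_def : (1 : KB) = ⟨0, 0⟩ := rfl
lemma inv_def (g : KB) : g⁻¹ = ⟨-g.a, -((g.a.negOnePow : ℤ) * g.b)⟩ := rfl

def Yk : KB := ⟨1, 0⟩
def Xk : KB := ⟨0, 1⟩

@[simp] lemma mul_a (g h : KB) : (g * h).a = g.a + h.a := rfl
@[simp] lemma mul_b (g h : KB) : (g * h).b = (h.a.negOnePow : ℤ) * g.b + h.b := rfl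
@[simp] lemma one_a : (1 : KB).a = 0 := rfl
@[simp] lemma one_b : (1 : KB).b = 0 := rfl
@[simp] lemma inv_a (g : KB) : (g⁻¹).a = -g.a := rfl
@[simp] lemma inv_b (g : KB) : (g⁻¹).b = -((g.a.negOnePow : ℤ) * g.b) := rfl

lemma negOnePow_natAbs (n : ℤ) : ((n.negOnePow : ℤ)).natAbs = 1 := by
  have h := Int.abs_negOnePow n
  rw [Int.abs_eq_natAbs] at h
  exact_mod_cast h

lemma Yk_zpow (n : ℤ) : Yk ^ n = ⟨n, 0⟩ := by
  induction n using Int.induction_on with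
  | zero => rfl
  | succ k ih => rw [zpow_add_one, ih]; ext <;> simp [Yk]
  | pred k ih => rw [sub_eq_add_neg, zpow_add, zpow_neg_one, ih]; ext <;> simp [Yk, inv_def]

lemma Xk_zpow (n : ℤ) : Xk ^ n = ⟨0, n⟩ := by
  induction n using Int.induction_on with
  | zero => rfl
  | succ k ih => rw [zpow_add_one, ih]; ext <;> simp [Xk]
  | pred k ih => rw [sub_eq_add_neg, zpow_add, zpow_neg_one, ih]; ext <;> simp [Xk, inv_def]

lemma normal_form (g : KB) : g = Yk ^ g.a * Xk ^ g.b := by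
  rw [Yk_zpow, Xk_zpow]; ext <;> simp

/-- In any `n`-th power, the first coordinate is multiplied by `n` and the second coordinate
is bounded. -/
lemma zpow_a (g : KB) (n : ℤ) : (g ^ n).a = n * g.a := by
  induction n using Int.induction_on with
  | zero => simp
  | succ k ih =>
    rw [zpow_add_one]; simp only [mul_a]; rw [ih]; ring
  | pred k ih =>
    have hsplit : g ^ (-(k:ℤ) - 1) = g ^ (-(k:ℤ)) * g⁻¹ := by
      rw [sub_eq_add_neg, zpow_add, zpow_neg_one]
    rw [hsplit]; simp only [mul_a, inv_a]; rw [ih]; ring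

lemma zpow_b_natAbs_le (g : KB) (n : ℤ) : (g ^ n).b.natAbs ≤ n.natAbs * g.b.natAbs := by
  induction n using Int.induction_on with
  | zero => simp
  | succ k ih =>
    rw [zpow_add_one g (k:ℤ)]
    have h1 : ((g ^ (k:ℤ)) * g).b = (g.a.negOnePow : ℤ) * (g ^ (k:ℤ)).b + g.b := rfl
    have h2 : ((g.a.negOnePow : ℤ) * (g ^ (k:ℤ)).b).natAbs = (g ^ (k:ℤ)).b.natAbs := by
      rw [Int.natAbs_mul, negOnePow_natAbs, one_mul]
    have h3 : (((g.a.negOnePow : ℤ) * (g ^ (k:ℤ)).b + g.b)).natAbs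
        ≤ (g ^ (k:ℤ)).b.natAbs + g.b.natAbs := by
      calc _ ≤ ((g.a.negOnePow : ℤ) * (g ^ (k:ℤ)).b).natAbs + g.b.natAbs := Int.natAbs_add_le _ _
        _ = _ := by rw [h2]
    rw [h1]
    have hk : ((k:ℤ)+1).natAbs = (k:ℤ).natAbs + 1 := by omega
    rw [hk]
    calc _ ≤ (g ^ (k:ℤ)).b.natAbs + g.b.natAbs := h3
      _ ≤ (k:ℤ).natAbs * g.b.natAbs + g.b.natAbs := by omega
      _ = ((k:ℤ).natAbs + 1) * g.b.natAbs := by ring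
  | pred k ih =>
    have hsplit : g ^ (-(k:ℤ) - 1) = g ^ (-(k:ℤ)) * g⁻¹ := by
      rw [sub_eq_add_neg, zpow_add, zpow_neg_one]
    rw [hsplit]
    have h1 : ((g ^ (-(k:ℤ))) * g⁻¹).b = ((g⁻¹).a.negOnePow : ℤ) * (g ^ (-(k:ℤ))).b + (g⁻¹).b := rfl
    have h2 : ∀ (u : ℤ) (v : ℤ), ((u.negOnePow : ℤ) * v).natAbs = v.natAbs := by
      intro u v; rw [Int.natAbs_mul, negOnePow_natAbs, one_mul]
    have hginv : (g⁻¹).b.natAbs = g.b.natAbs := by rw [inv_b, Int.natAbs_neg, h2]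
    have h3 : (((g⁻¹).a.negOnePow : ℤ) * (g ^ (-(k:ℤ))).b + (g⁻¹).b).natAbs
        ≤ (g ^ (-(k:ℤ))).b.natAbs + g.b.natAbs := by
      calc _ ≤ (((g⁻¹).a.negOnePow : ℤ) * (g ^ (-(k:ℤ))).b).natAbs + (g⁻¹).b.natAbs :=
            Int.natAbs_add_le _ _
        _ = _ := by rw [h2, hginv]
    rw [h1]
    have hk : (-(k:ℤ)-1).natAbs = (-(k:ℤ)).natAbs + 1 := by omega
    rw [hk]
    calc _ ≤ (g ^ (-(k:ℤ))).b.natAbs + g.b.natAbs := h3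
      _ ≤ (-(k:ℤ)).natAbs * g.b.natAbs + g.b.natAbs := by omega
      _ = ((-(k:ℤ)).natAbs + 1) * g.b.natAbs := by ring

lemma word_size_sub (t p : KB) :
    (t * p).a.natAbs + (t * p).b.natAbs
      ≤ (t.a.natAbs + t.b.natAbs) + (p.a.natAbs + p.b.natAbs) := by
  have h1 : (t * p).a.natAbs ≤ t.a.natAbs + p.a.natAbs := Int.natAbs_add_le _ _
  have h2 : (t * p).b.natAbs ≤ t.b.natAbs + p.b.natAbs := by
    calc (t * p).b.natAbs ≤ ((p.a.negOnePow : ℤ) * t.b).natAbs + p.b.natAbs :=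
          Int.natAbs_add_le _ _
      _ = t.b.natAbs + p.b.natAbs := by rw [Int.natAbs_mul, negOnePow_natAbs, one_mul]
  omega

/-- Standard generators of `KB`. -/
def S0K : Set KB := {Yk, Xk}

lemma closure_S0K : Subgroup.closure S0K = ⊤ := by
  rw [eq_top_iff]; intro g _
  rw [normal_form g]
  exact Subgroup.mul_mem _
    (Subgroup.zpow_mem _ (Subgroup.subset_closure (by simp [S0K])) _)
    (Subgroup.zpow_mem _ (Subgroup.subset_closure (by simp [S0K])) _)

lemma letter_size {t : KB} (ht : t ∈ S0K ∨ t⁻¹ ∈ S0K) : t.a.natAbs + t.b.natAbs ≤ 1 := by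
  rcases ht with ht | ht
  · rcases ht with h | h <;> subst h <;> simp [Yk, Xk]
  · rcases ht with h | h
    · have : t = Yk⁻¹ := by rw [← h, inv_inv]
      subst this; simp [inv_def, Yk]
    · have : t = Xk⁻¹ := by rw [← h, inv_inv]
      subst this; simp [inv_def, Xk]

lemma word_lower_bound : ∀ w : List KB, (∀ x ∈ w, x ∈ S0K ∨ x⁻¹ ∈ S0K) →
    w.prod.a.natAbs + w.prod.b.natAbs ≤ w.length := by
  intro w
  induction w with
  | nil => intro _; simp
  | cons t w ih =>
    intro hw
    have h1 := letter_size (hw t (by simp))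
    have h2 := ih (fun x hx => hw x (by simp [hx]))
    rw [List.prod_cons]
    calc (t * w.prod).a.natAbs + (t * w.prod).b.natAbs
        ≤ (t.a.natAbs + t.b.natAbs) + (w.prod.a.natAbs + w.prod.b.natAbs) := word_size_sub _ _
      _ ≤ 1 + w.length := by omega
      _ = (t :: w).length := by simp [Nat.add_comm]

end KB

namespace KBG

open KB

noncomputable def X : KleinBottleGroup := PresentedGroup.of 0
noncomputable def Y : KleinBottleGroup := PresentedGroup.of 1

lemma rel : Y * X * Y⁻¹ * X = 1 := by
  have h : (FreeGroup.of 1 * FreeGroup.of 0 * (FreeGroup.of 1)⁻¹ * FreeGroup.of 0) ∈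
      Subgroup.normalClosure kleinRels :=
    Subgroup.subset_normalClosure rfl
  have := (QuotientGroup.eq_one_iff
    (G := FreeGroup (Fin 2)) (N := Subgroup.normalClosure kleinRels)
    (FreeGroup.of 1 * FreeGroup.of 0 * (FreeGroup.of 1)⁻¹ * FreeGroup.of 0)).mpr h
  exact this

/-- The projection to the concrete model. -/
noncomputable def p : KleinBottleGroup →* KB :=
  PresentedGroup.toGroup (f := fun i : Fin 2 => if i = 0 then Xk else Yk) (by
    intro r hr
    rw [kleinRels] at hr
    simp only [Set.mem_singleton_iff] at hr
    subst hr
    simp only [map_mul, map_inv, FreeGroup.lift_apply_of]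
    norm_num
    ext <;> simp [Yk, Xk, mul_def, inv_def, one_def])

@[simp] lemma p_X : p X = Xk := by
  simp [p, X, PresentedGroup.toGroup.of]

@[simp] lemma p_Y : p Y = Yk := by
  simp [p, Y, PresentedGroup.toGroup.of]

lemma X_ne_one : X ≠ 1 := by
  intro h
  have h2 : p X = 1 := by rw [h, map_one]
  rw [p_X] at h2
  have h3 : (Xk).b = (1 : KB).b := by rw [h2]
  simp [Xk, one_def] at h3

lemma key1 : Y * X * Y⁻¹ = X⁻¹ := by
  have h := rel
  have : Y * X * Y⁻¹ = 1 * X⁻¹ := by rw [← h]; group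
  simpa using this

lemma key2 : Y⁻¹ * X * Y = X⁻¹ := by
  have h1 : Y⁻¹ * X⁻¹ * Y = X := by
    calc Y⁻¹ * X⁻¹ * Y = Y⁻¹ * (Y * X * Y⁻¹) * Y := by rw [key1]
      _ = X := by group
  have h2 : (Y⁻¹ * X * Y)⁻¹ = X := by
    calc (Y⁻¹ * X * Y)⁻¹ = Y⁻¹ * X⁻¹ * Y := by group
      _ = X := h1
  calc Y⁻¹ * X * Y = ((Y⁻¹ * X * Y)⁻¹)⁻¹ := by rw [inv_inv]
    _ = X⁻¹ := by rw [h2]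

lemma swapY (b : ℤ) : X ^ b * Y = Y * X ^ (-b) := by
  have h : (MulAut.conj Y⁻¹) (X ^ b) = ((MulAut.conj Y⁻¹) X) ^ b := map_zpow _ _ _
  have h2 : (MulAut.conj Y⁻¹) X = X⁻¹ := by
    simp only [MulAut.conj_apply, inv_inv]
    exact key2
  rw [h2] at h
  simp only [MulAut.conj_apply, inv_inv] at h
  -- h : Y⁻¹ * X ^ b * Y = (X⁻¹) ^ b
  have h3 : Y⁻¹ * X ^ b * Y = X ^ (-b) := by rw [h, inv_zpow, zpow_neg]
  calc X ^ b * Y = Y * (Y⁻¹ * X ^ b * Y) := by group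
    _ = Y * X ^ (-b) := by rw [h3]

lemma swapY' (b : ℤ) : X ^ b * Y⁻¹ = Y⁻¹ * X ^ (-b) := by
  have h : (MulAut.conj Y) (X ^ b) = ((MulAut.conj Y) X) ^ b := map_zpow _ _ _
  have h2 : (MulAut.conj Y) X = X⁻¹ := by
    simp only [MulAut.conj_apply]
    exact key1
  rw [h2] at h
  simp only [MulAut.conj_apply] at h
  have h3 : Y * X ^ b * Y⁻¹ = X ^ (-b) := by rw [h, inv_zpow, zpow_neg]
  calc X ^ b * Y⁻¹ = Y⁻¹ * (Y * X ^ b * Y⁻¹) := by group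
    _ = Y⁻¹ * X ^ (-b) := by rw [h3]

lemma mainkey (c : ℤ) : ∀ b : ℤ, X ^ b * Y ^ c = Y ^ c * X ^ ((c.negOnePow : ℤ) * b) := by
  induction c using Int.induction_on with
  | zero => intro b; simp
  | succ k ih =>
    intro b
    have hcast : (((k:ℤ) + 1).negOnePow : ℤ) = -(((k:ℤ)).negOnePow : ℤ) := by
      rw [Int.negOnePow_succ]; simp
    calc X ^ b * Y ^ ((k:ℤ) + 1) = (X ^ b * Y ^ (k:ℤ)) * Y := by
          rw [zpow_add_one, mul_assoc]
      _ = Y ^ (k:ℤ) * (X ^ (((k:ℤ).negOnePow : ℤ) * b) * Y) := by rw [ih b, mul_assoc]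
      _ = Y ^ (k:ℤ) * (Y * X ^ (-(((k:ℤ).negOnePow : ℤ) * b))) := by rw [swapY]
      _ = Y ^ ((k:ℤ) + 1) * X ^ ((((k:ℤ) + 1).negOnePow : ℤ) * b) := by
          rw [zpow_add_one, mul_assoc, hcast]; ring_nf
  | pred k ih =>
    intro b
    have hcast : ((-(k:ℤ) - 1).negOnePow : ℤ) = -(((-(k:ℤ))).negOnePow : ℤ) := by
      rw [show (-(k:ℤ) - 1) = (-(k:ℤ)) + (-1) by ring, Int.negOnePow_add]
      simp [Int.negOnePow_neg]
    have hsplit : Y ^ (-(k:ℤ) - 1) = Y ^ (-(k:ℤ)) * Y⁻¹ := by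
      rw [sub_eq_add_neg, zpow_add, zpow_neg_one]
    calc X ^ b * Y ^ (-(k:ℤ) - 1) = (X ^ b * Y ^ (-(k:ℤ))) * Y⁻¹ := by
          rw [hsplit, mul_assoc]
      _ = Y ^ (-(k:ℤ)) * (X ^ (((-(k:ℤ)).negOnePow : ℤ) * b) * Y⁻¹) := by
          rw [ih b, mul_assoc]
      _ = Y ^ (-(k:ℤ)) * (Y⁻¹ * X ^ (-(((-(k:ℤ)).negOnePow : ℤ) * b))) := by rw [swapY']
      _ = Y ^ (-(k:ℤ) - 1) * X ^ (((-(k:ℤ) - 1).negOnePow : ℤ) * b) := by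
          rw [hsplit, mul_assoc, hcast]; ring_nf

/-- The section `KB →* π`. -/
noncomputable def theta : KB →* KleinBottleGroup :=
  MonoidHom.mk' (fun g => Y ^ g.a * X ^ g.b) (by
    intro g h
    show Y ^ (g.a + h.a) * X ^ ((h.a.negOnePow : ℤ) * g.b + h.b)
        = (Y ^ g.a * X ^ g.b) * (Y ^ h.a * X ^ h.b)
    rw [zpow_add, zpow_add]
    calc Y ^ g.a * Y ^ h.a * (X ^ ((h.a.negOnePow : ℤ) * g.b) * X ^ h.b)
        = Y ^ g.a * ((Y ^ h.a * X ^ ((h.a.negOnePow : ℤ) * g.b)) * X ^ h.b) := by group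
      _ = Y ^ g.a * ((X ^ g.b * Y ^ h.a) * X ^ h.b) := by rw [← mainkey]
      _ = (Y ^ g.a * X ^ g.b) * (Y ^ h.a * X ^ h.b) := by group)

@[simp] lemma theta_apply (g : KB) : theta g = Y ^ g.a * X ^ g.b := rfl

lemma p_theta (g : KB) : p (theta g) = g := by
  rw [theta_apply, map_mul, map_zpow, map_zpow, p_X, p_Y, Yk_zpow, Xk_zpow]
  ext <;> simp

lemma theta_p : ∀ g : KleinBottleGroup, theta (p g) = g := by
  have h : theta.comp p = MonoidHom.id KleinBottleGroup := by
    apply PresentedGroup.ext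
    intro i
    fin_cases i
    · show theta (p X) = X
      rw [p_X]
      show Y ^ (0:ℤ) * X ^ (1:ℤ) = X
      simp
    · show theta (p Y) = Y
      rw [p_Y]
      show Y ^ (1:ℤ) * X ^ (0:ℤ) = Y
      simp
  intro g
  exact DFunLike.congr_fun h g

end KBG

namespace WL

/-- Iterates of a monoid hom, as a monoid hom. -/
noncomputable def phx {G : Type*} [Group G] (φ : G →* G) : ℕ → (G →* G)
  | 0 => MonoidHom.id _
  | (k+1) => (phx φ k).comp φ

lemma phx_apply {G : Type*} [Group G] (φ : G →* G) (k : ℕ) (g : G) :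
    phx φ k g = (⇑φ)^[k] g := by
  induction k generalizing g with
  | zero => rfl
  | succ k ih =>
    show phx φ k (φ g) = _
    rw [ih, Function.iterate_succ_apply]

end WL

namespace KBG

open KB WL

lemma closure_S0 : Subgroup.closure ({X, Y} : Set KleinBottleGroup) = ⊤ := by
  have h := PresentedGroup.closure_range_of kleinRels
  have hr : Set.range (PresentedGroup.of : Fin 2 → KleinBottleGroup) = {X, Y} := by
    ext g
    constructor
    · rintro ⟨i, rfl⟩
      fin_cases i
      · exact Or.inl rfl
      · exact Or.inr rfl
    · rintro (rfl | rfl)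
      · exact ⟨0, rfl⟩
      · exact ⟨1, rfl⟩
  rwa [hr] at h

def S0 : Set KleinBottleGroup := {X, Y}

lemma reach_S0 : ∀ g, Reach S0 g := reach_of_closure closure_S0

lemma reach_S0K : ∀ g : KB, Reach S0K g := reach_of_closure closure_S0K

lemma kb_lower (g : KB) : g.a.natAbs + g.b.natAbs ≤ wordLength S0K g := by
  obtain ⟨w, hw, hp, hl⟩ := exists_min_word (reach_S0K g)
  rw [← hl, ← hp]
  exact word_lower_bound w hw

lemma wl_S0_X : wordLength S0 X ≤ 1 :=
  wordLength_le (w := [X]) (by intro x hx; simp at hx; subst hx; exact Or.inl (Or.inl rfl))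
    (by simp)

lemma wl_S0_Y : wordLength S0 Y ≤ 1 :=
  wordLength_le (w := [Y]) (by intro x hx; simp at hx; subst hx; exact Or.inl (Or.inr rfl))
    (by simp)

lemma wl_S0K_p : ∀ s ∈ S0, wordLength S0K (p s) ≤ 1 := by
  rintro s (rfl | rfl)
  · rw [p_X]
    exact wordLength_le (w := [Xk])
      (by intro x hx; simp at hx; subst hx; exact Or.inl (Or.inr rfl)) (by simp)
  · rw [p_Y]
    exact wordLength_le (w := [Yk])
      (by intro x hx; simp at hx; subst hx; exact Or.inl (Or.inl rfl)) (by simp)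

lemma p_lower (g : KleinBottleGroup) :
    (p g).a.natAbs + (p g).b.natAbs ≤ wordLength S0 g := by
  have h := wordLength_hom_le (C := 1) p reach_S0K reach_S0 wl_S0K_p g
  have := kb_lower (p g)
  omega

section Endo

variable (q r l : ℤ) (φ : KleinBottleGroup →* KleinBottleGroup)
  (hx : φ X = X ^ q) (hy : φ Y = Y ^ r * X ^ l)

/-- The induced endomorphism of the concrete model. -/
noncomputable def psi : KB →* KB := p.comp (φ.comp theta)

lemma psi_apply (g : KB) : psi φ g = p (φ (theta g)) := rfl

include hx in
lemma psi_Xk : psi φ Xk = ⟨0, q⟩ := by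
  have h1 : theta Xk = X := by
    show Y ^ (0:ℤ) * X ^ (1:ℤ) = X
    simp
  rw [psi_apply, h1, hx, map_zpow, p_X, Xk_zpow]

include hy in
lemma psi_Yk : psi φ Yk = ⟨r, l⟩ := by
  have h1 : theta Yk = Y := by
    show Y ^ (1:ℤ) * X ^ (0:ℤ) = Y
    simp
  rw [psi_apply, h1, hy, map_mul, map_zpow, map_zpow, p_X, p_Y, Xk_zpow, Yk_zpow]
  ext <;> simp

lemma phi_iterate (k : ℕ) (g : KleinBottleGroup) :
    (⇑φ)^[k] g = theta ((⇑(psi φ))^[k] (p g)) := by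
  induction k generalizing g with
  | zero => exact (theta_p g).symm
  | succ k ih =>
    rw [Function.iterate_succ_apply, ih (φ g), Function.iterate_succ_apply]
    congr 2
    rw [psi_apply, theta_p]

include hx in
lemma psi_iter_Xk (k : ℕ) : (⇑(psi φ))^[k] Xk = ⟨0, q ^ k⟩ := by
  induction k with
  | zero => simp [Xk]
  | succ k ih =>
    rw [Function.iterate_succ_apply', ih]
    have h1 : (⟨0, q ^ k⟩ : KB) = Xk ^ (q ^ k) := by rw [Xk_zpow]
    rw [h1, map_zpow, psi_Xk q φ hx]
    have h2 : (⟨0, q⟩ : KB) = Xk ^ q := by rw [Xk_zpow]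
    rw [h2, ← zpow_mul, Xk_zpow]
    congr 1
    rw [pow_succ]
    ring

include hx hy in
lemma psi_iter_Yk (hm : 1 ≤ max q.natAbs r.natAbs) (k : ℕ) :
    ((⇑(psi φ))^[k] Yk).a = r ^ k ∧
    ((⇑(psi φ))^[k] Yk).b.natAbs ≤ l.natAbs * k * (max q.natAbs r.natAbs) ^ k := by
  set m := max q.natAbs r.natAbs with hmdef
  induction k with
  | zero => constructor <;> simp [Yk]
  | succ k ih =>
    obtain ⟨iha, ihb⟩ := ih
    set g := (⇑(psi φ))^[k] Yk with hg
    have hdecomp : (⇑(psi φ))^[k+1] Yk = (⟨r, l⟩ : KB) ^ g.a * (⟨0, q * g.b⟩ : KB) := by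
      rw [Function.iterate_succ_apply', ← hg]
      calc psi φ g = psi φ (Yk ^ g.a * Xk ^ g.b) := by conv_lhs => rw [normal_form g]
        _ = (psi φ Yk) ^ g.a * (psi φ Xk) ^ g.b := by rw [map_mul, map_zpow, map_zpow]
        _ = (⟨r, l⟩ : KB) ^ g.a * (⟨0, q * g.b⟩ : KB) := by
            rw [psi_Xk q φ hx, psi_Yk r l φ hy]
            congr 1
            have h2 : (⟨0, q⟩ : KB) = Xk ^ q := by rw [Xk_zpow]
            rw [h2, ← zpow_mul, Xk_zpow]
    constructor
    · rw [hdecomp]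
      show ((⟨r, l⟩ : KB) ^ g.a).a + (⟨0, q * g.b⟩ : KB).a = r ^ (k+1)
      rw [zpow_a, iha]
      show r ^ k * r + 0 = r ^ (k + 1)
      rw [pow_succ]; ring
    · rw [hdecomp]
      have hb : ((⟨r, l⟩ : KB) ^ g.a * (⟨0, q * g.b⟩ : KB)).b
          = (((0:ℤ)).negOnePow : ℤ) * ((⟨r, l⟩ : KB) ^ g.a).b + q * g.b := rfl
      rw [hb]
      have h0 : (((0:ℤ)).negOnePow : ℤ) = 1 := by simp
      rw [h0, one_mul]
      have hb1 : ((⟨r, l⟩ : KB) ^ g.a).b.natAbs ≤ g.a.natAbs * l.natAbs :=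
        zpow_b_natAbs_le _ _
      have hga : g.a.natAbs = r.natAbs ^ k := by rw [iha, Int.natAbs_pow]
      have hq : q.natAbs ≤ m := le_max_left _ _
      have hr : r.natAbs ≤ m := le_max_right _ _
      have hrk : r.natAbs ^ k ≤ m ^ k := Nat.pow_le_pow_left hr k
      have hmk : m ^ k ≤ m ^ (k+1) := Nat.pow_le_pow_right hm (by omega)
      have step1 : ((⟨r, l⟩ : KB) ^ g.a).b.natAbs ≤ l.natAbs * m ^ k := by
        calc ((⟨r, l⟩ : KB) ^ g.a).b.natAbs ≤ g.a.natAbs * l.natAbs := hb1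
          _ = r.natAbs ^ k * l.natAbs := by rw [hga]
          _ ≤ m ^ k * l.natAbs := Nat.mul_le_mul_right _ hrk
          _ = l.natAbs * m ^ k := Nat.mul_comm _ _
      have step2 : (q * g.b).natAbs ≤ l.natAbs * k * m ^ (k+1) := by
        calc (q * g.b).natAbs = q.natAbs * g.b.natAbs := Int.natAbs_mul _ _
          _ ≤ m * (l.natAbs * k * m ^ k) := Nat.mul_le_mul hq ihb
          _ = l.natAbs * k * m ^ (k+1) := by rw [pow_succ]; ring
      calc (((⟨r, l⟩ : KB) ^ g.a).b + q * g.b).natAbs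
          ≤ ((⟨r, l⟩ : KB) ^ g.a).b.natAbs + (q * g.b).natAbs := Int.natAbs_add_le _ _
        _ ≤ l.natAbs * m ^ k + l.natAbs * k * m ^ (k+1) := by omega
        _ ≤ l.natAbs * m ^ (k+1) + l.natAbs * k * m ^ (k+1) := by
            have := Nat.mul_le_mul_left l.natAbs hmk
            omega
        _ = l.natAbs * (k+1) * m ^ (k+1) := by ring

end Endo

end KBG

namespace KBG

open KB WL Real

section Endo2

variable (q r l : ℤ) (φ : KleinBottleGroup →* KleinBottleGroup)
  (hx : φ X = X ^ q) (hy : φ Y = Y ^ r * X ^ l)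

include hx in
lemma low_X (k : ℕ) : q.natAbs ^ k ≤ wordLength S0 ((⇑φ)^[k] X) := by
  have h1 : p ((⇑φ)^[k] X) = ⟨0, q ^ k⟩ := by
    rw [phi_iterate, p_X, p_theta, psi_iter_Xk q φ hx]
  have h2 := p_lower ((⇑φ)^[k] X)
  rw [h1] at h2
  have h3 : ((⟨0, q ^ k⟩ : KB)).a.natAbs + ((⟨0, q ^ k⟩ : KB)).b.natAbs
      = q.natAbs ^ k := by
    show (0:ℤ).natAbs + (q ^ k).natAbs = q.natAbs ^ k
    rw [Int.natAbs_pow]; simp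
  omega

include hx hy in
lemma low_Y (hm : 1 ≤ max q.natAbs r.natAbs) (k : ℕ) :
    r.natAbs ^ k ≤ wordLength S0 ((⇑φ)^[k] Y) := by
  have h1 : p ((⇑φ)^[k] Y) = (⇑(psi φ))^[k] Yk := by
    rw [phi_iterate, p_Y, p_theta]
  have h2 := p_lower ((⇑φ)^[k] Y)
  rw [h1] at h2
  have h3 : ((⇑(psi φ))^[k] Yk).a.natAbs = r.natAbs ^ k := by
    rw [(psi_iter_Yk q r l φ hx hy hm k).1, Int.natAbs_pow]
  omega

include hx in
lemma up_X (k : ℕ) : wordLength S0 ((⇑φ)^[k] X) ≤ q.natAbs ^ k := by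
  have h1 : (⇑φ)^[k] X = X ^ (q ^ k) := by
    rw [phi_iterate, p_X, psi_iter_Xk q φ hx]
    show Y ^ (0:ℤ) * X ^ (q ^ k) = X ^ (q ^ k)
    simp
  rw [h1]
  calc wordLength S0 (X ^ (q ^ k)) ≤ (q ^ k).natAbs * wordLength S0 X :=
        wordLength_zpow_le reach_S0 _
    _ ≤ (q ^ k).natAbs * 1 := Nat.mul_le_mul_left _ wl_S0_X
    _ = q.natAbs ^ k := by rw [Int.natAbs_pow]; omega

include hx hy in
lemma up_Y (hm : 1 ≤ max q.natAbs r.natAbs) (k : ℕ) :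
    wordLength S0 ((⇑φ)^[k] Y)
      ≤ r.natAbs ^ k + l.natAbs * k * (max q.natAbs r.natAbs) ^ k := by
  set g := (⇑(psi φ))^[k] Yk with hg
  have h1 : (⇑φ)^[k] Y = Y ^ g.a * X ^ g.b := by
    rw [phi_iterate, p_Y, ← hg]
    rfl
  have ha : g.a.natAbs = r.natAbs ^ k := by
    rw [(psi_iter_Yk q r l φ hx hy hm k).1, Int.natAbs_pow]
  have hb := (psi_iter_Yk q r l φ hx hy hm k).2
  rw [h1]
  calc wordLength S0 (Y ^ g.a * X ^ g.b)
      ≤ wordLength S0 (Y ^ g.a) + wordLength S0 (X ^ g.b) :=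
        wordLength_mul_le (reach_S0 _) (reach_S0 _)
    _ ≤ g.a.natAbs * wordLength S0 Y + g.b.natAbs * wordLength S0 X :=
        Nat.add_le_add (wordLength_zpow_le reach_S0 _) (wordLength_zpow_le reach_S0 _)
    _ ≤ g.a.natAbs * 1 + g.b.natAbs * 1 :=
        Nat.add_le_add (Nat.mul_le_mul_left _ wl_S0_Y) (Nat.mul_le_mul_left _ wl_S0_X)
    _ ≤ r.natAbs ^ k + l.natAbs * k * (max q.natAbs r.natAbs) ^ k := by
        rw [← hg] at hb
        omega

end Endo2

end KBG

namespace KBG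

open KB WL Real

section Chain

variable (φ : KleinBottleGroup →* KleinBottleGroup)
  (S : Finset KleinBottleGroup)
  (hS : Subgroup.closure (S : Set KleinBottleGroup) = ⊤)

/-- `N k` : the `S0`-based `L_k`. -/
noncomputable def Nk (k : ℕ) : ℕ :=
  max (wordLength S0 ((⇑φ)^[k] X)) (wordLength S0 ((⇑φ)^[k] Y))

/-- `A` : size of std generators w.r.t. `S`. -/
noncomputable def Ac (S : Finset KleinBottleGroup) : ℕ :=
  max (wordLength (S : Set KleinBottleGroup) X) (wordLength (S : Set KleinBottleGroup) Y)

/-- `B` : size of `S` w.r.t. std generators. -/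
noncomputable def Bc (S : Finset KleinBottleGroup) : ℕ :=
  S.sup fun s => wordLength S0 s

lemma le_Bc {S : Finset KleinBottleGroup} {s : KleinBottleGroup} (hs : s ∈ S) :
    wordLength S0 s ≤ Bc S := by
  unfold Bc; exact Finset.le_sup (f := fun s => wordLength S0 s) hs

lemma le_Lk (φ : KleinBottleGroup →* KleinBottleGroup) {S : Finset KleinBottleGroup} (k : ℕ)
    {s : KleinBottleGroup} (hs : s ∈ S) :
    wordLength (S : Set KleinBottleGroup) ((⇑φ)^[k] s) ≤ Lk S ⇑φ k := by
  unfold Lk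
  exact Finset.le_sup (f := fun s => wordLength (S : Set KleinBottleGroup) ((⇑φ)^[k] s)) hs

lemma Lk_le {S : Finset KleinBottleGroup} {φ : KleinBottleGroup →* KleinBottleGroup} {k : ℕ}
    {c : ℕ} (h : ∀ s ∈ S, wordLength (S : Set KleinBottleGroup) ((⇑φ)^[k] s) ≤ c) :
    Lk S ⇑φ k ≤ c := by
  unfold Lk; exact Finset.sup_le h

include hS in
lemma hA1 : 1 ≤ Ac S :=
  le_trans (one_le_wordLength (reach_of_closure hS X) X_ne_one) (le_max_left _ _)

include hS in
lemma hB1 : 1 ≤ Bc S := by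
  by_contra h
  have hB0 : Bc S = 0 := by omega
  have hsub : (S : Set KleinBottleGroup) ⊆ {1} := by
    intro s hs
    have h1 : wordLength S0 s ≤ Bc S := le_Bc (Finset.mem_coe.mp hs)
    have h2 : wordLength S0 s = 0 := by omega
    exact eq_one_of_wordLength_eq_zero (reach_S0 s) h2
  have hle : Subgroup.closure (S : Set KleinBottleGroup) ≤ Subgroup.closure {1} :=
    Subgroup.closure_mono hsub
  rw [hS, Subgroup.closure_singleton_one] at hle
  exact X_ne_one (Subgroup.mem_bot.mp (hle (Subgroup.mem_top X)))

include hS in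
lemma up_chain (k : ℕ) : Lk S ⇑φ k ≤ Ac S * (Nk φ k * Bc S) := by
  apply Lk_le
  intro s hs
  have h1 : wordLength (S : Set KleinBottleGroup) ((⇑φ)^[k] s)
      ≤ Ac S * wordLength S0 ((⇑φ)^[k] s) := by
    have := wordLength_hom_le (C := Ac S) (MonoidHom.id KleinBottleGroup)
      (reach_of_closure hS) reach_S0 ?_ ((⇑φ)^[k] s)
    · exact this
    · rintro t (rfl | rfl)
      · exact le_max_left _ _
      · exact le_max_right _ _
  have h2 : wordLength S0 ((⇑φ)^[k] s) ≤ Nk φ k * wordLength S0 s := by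
    have := wordLength_hom_le (C := Nk φ k) (phx φ k) reach_S0 reach_S0 ?_ s
    · rwa [phx_apply] at this
    · rintro t (rfl | rfl)
      · rw [phx_apply]; exact le_max_left _ _
      · rw [phx_apply]; exact le_max_right _ _
  have h3 : wordLength S0 s ≤ Bc S := le_Bc hs
  calc wordLength (S : Set KleinBottleGroup) ((⇑φ)^[k] s)
      ≤ Ac S * wordLength S0 ((⇑φ)^[k] s) := h1
    _ ≤ Ac S * (Nk φ k * wordLength S0 s) := Nat.mul_le_mul_left _ h2
    _ ≤ Ac S * (Nk φ k * Bc S) := by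
        exact Nat.mul_le_mul_left _ (Nat.mul_le_mul_left _ h3)

include hS in
lemma low_chain (k : ℕ) : Nk φ k ≤ Bc S * (Lk S ⇑φ k * Ac S) := by
  have key : ∀ t : KleinBottleGroup, t ∈ S0 →
      wordLength S0 ((⇑φ)^[k] t) ≤ Bc S * (Lk S ⇑φ k * Ac S) := by
    intro t ht
    have h1 : wordLength S0 ((⇑φ)^[k] t)
        ≤ Bc S * wordLength (S : Set KleinBottleGroup) ((⇑φ)^[k] t) := by
      have := wordLength_hom_le (C := Bc S) (MonoidHom.id KleinBottleGroup)
        reach_S0 (reach_of_closure hS) ?_ ((⇑φ)^[k] t)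
      · exact this
      · intro s hs
        exact le_Bc (Finset.mem_coe.mp hs)
    have h2 : wordLength (S : Set KleinBottleGroup) ((⇑φ)^[k] t)
        ≤ Lk S ⇑φ k * wordLength (S : Set KleinBottleGroup) t := by
      have := wordLength_hom_le (C := Lk S ⇑φ k) (phx φ k)
        (reach_of_closure hS) (reach_of_closure hS) ?_ t
      · rwa [phx_apply] at this
      · intro s hs
        rw [phx_apply]
        exact le_Lk φ k (Finset.mem_coe.mp hs)
    have h3 : wordLength (S : Set KleinBottleGroup) t ≤ Ac S := by
      rcases ht with rfl | rfl
      · exact le_max_left _ _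
      · exact le_max_right _ _
    calc wordLength S0 ((⇑φ)^[k] t)
        ≤ Bc S * wordLength (S : Set KleinBottleGroup) ((⇑φ)^[k] t) := h1
      _ ≤ Bc S * (Lk S ⇑φ k * wordLength (S : Set KleinBottleGroup) t) :=
          Nat.mul_le_mul_left _ h2
      _ ≤ Bc S * (Lk S ⇑φ k * Ac S) :=
          Nat.mul_le_mul_left _ (Nat.mul_le_mul_left _ h3)
  exact max_le (key X (Or.inl rfl)) (key Y (Or.inr rfl))

include hS in
lemma Lk_submult (a b : ℕ) : Lk S ⇑φ (a + b) ≤ Lk S ⇑φ a * Lk S ⇑φ b := by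
  apply Lk_le
  intro s hs
  have hsplit : (⇑φ)^[a + b] s = (⇑φ)^[a] ((⇑φ)^[b] s) := Function.iterate_add_apply _ _ _ _
  rw [hsplit]
  have h1 : wordLength (S : Set KleinBottleGroup) ((⇑φ)^[a] ((⇑φ)^[b] s))
      ≤ Lk S ⇑φ a * wordLength (S : Set KleinBottleGroup) ((⇑φ)^[b] s) := by
    have := wordLength_hom_le (C := Lk S ⇑φ a) (phx φ a)
      (reach_of_closure hS) (reach_of_closure hS) ?_ ((⇑φ)^[b] s)
    · rwa [phx_apply] at this
    · intro t ht
      rw [phx_apply]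
      exact le_Lk φ a (Finset.mem_coe.mp ht)
  have h2 : wordLength (S : Set KleinBottleGroup) ((⇑φ)^[b] s) ≤ Lk S ⇑φ b :=
    le_Lk φ b hs
  calc wordLength (S : Set KleinBottleGroup) ((⇑φ)^[a] ((⇑φ)^[b] s))
      ≤ Lk S ⇑φ a * wordLength (S : Set KleinBottleGroup) ((⇑φ)^[b] s) := h1
    _ ≤ Lk S ⇑φ a * Lk S ⇑φ b := Nat.mul_le_mul_left _ h2

end Chain

end KBG

/-- For the Klein bottle group `π = ⟨x, y | y x y⁻¹ = x⁻¹⟩` and an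
endomorphism `φ` with `φ(x) = x^q`, `φ(y) = y^r x^ℓ`, one has `GR(φ) = max{|q|, |r|}`. -/
theorem GR_kleinBottle (q r l : ℤ) (φ : KleinBottleGroup →* KleinBottleGroup)
    (hx : φ (PresentedGroup.of 0) = PresentedGroup.of 0 ^ q)
    (hy : φ (PresentedGroup.of 1) = PresentedGroup.of 1 ^ r * PresentedGroup.of 0 ^ l)
    (S : Finset KleinBottleGroup)
    (hS : Subgroup.closure (S : Set KleinBottleGroup) = ⊤) :
    GR S ⇑φ = max |(q : ℝ)| |(r : ℝ)| := by
  classical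
  open KB WL KBG Real in
  have hx' : φ KBG.X = KBG.X ^ q := hx
  have hy' : φ KBG.Y = KBG.Y ^ r * KBG.X ^ l := hy
  have hGRnonneg : ∀ k : ℕ+, (0:ℝ) ≤ ((Lk S ⇑φ (k:ℕ) : ℕ) : ℝ) ^ ((((k:ℕ)):ℝ))⁻¹ :=
    fun k => Real.rpow_nonneg (Nat.cast_nonneg _) _
  have hbddGR : BddBelow (Set.range fun k : ℕ+ =>
      ((Lk S ⇑φ (k:ℕ) : ℕ) : ℝ) ^ ((((k:ℕ)):ℝ))⁻¹) := by
    refine ⟨0, ?_⟩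
    rintro x ⟨k, rfl⟩
    exact hGRnonneg k
  by_cases h0 : q = 0 ∧ r = 0
  · -- trivial case
    obtain ⟨rfl, rfl⟩ := h0
    have hφX : φ KBG.X = 1 := by rw [hx']; simp
    have hcomp : ∀ g, φ (φ g) = 1 := by
      have hc : φ.comp φ = (1 : KleinBottleGroup →* KleinBottleGroup) := by
        apply PresentedGroup.ext
        intro i
        fin_cases i
        · show φ (φ KBG.X) = 1
          rw [hx']; simp
        · show φ (φ KBG.Y) = 1
          rw [hy']
          simp only [zpow_zero, one_mul, map_zpow, hφX]
          simp
      intro g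
      have := DFunLike.congr_fun hc g
      simpa using this
    have hLk2 : Lk S ⇑φ 2 = 0 := by
      apply Nat.le_zero.mp
      apply KBG.Lk_le
      intro s _
      have h2 : (⇑φ)^[2] s = 1 := hcomp s
      rw [h2, wordLength_one]
    have hterm2 : ((Lk S ⇑φ ((2:ℕ+):ℕ) : ℕ) : ℝ) ^ ((((2:ℕ+):ℕ):ℝ))⁻¹ = 0 := by
      rw [show ((2:ℕ+):ℕ) = 2 from rfl, hLk2]
      norm_num
    have hle : GR S ⇑φ ≤ 0 := by
      have := ciInf_le hbddGR (2:ℕ+)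
      rw [hterm2] at this
      exact this
    have hge : 0 ≤ GR S ⇑φ := le_ciInf hGRnonneg
    have : GR S ⇑φ = 0 := le_antisymm hle hge
    rw [this]
    norm_num
  · -- main case
    set m : ℕ := max q.natAbs r.natAbs with hmdef
    have hm : 1 ≤ m := by
      rcases Nat.eq_zero_or_pos m with h | h
      · exfalso
        have hq0 : q.natAbs = 0 := by omega
        have hr0 : r.natAbs = 0 := by omega
        exact h0 ⟨Int.natAbs_eq_zero.mp hq0, Int.natAbs_eq_zero.mp hr0⟩
      · omega
    have hmR : (1:ℝ) ≤ (m:ℝ) := by exact_mod_cast hm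
    have hmR0 : (0:ℝ) < (m:ℝ) := by linarith
    set L : ℕ := l.natAbs with hLdef
    -- nat bounds
    have hmN : ∀ k : ℕ, m ^ k ≤ KBG.Nk φ k := by
      intro k
      rcases le_total q.natAbs r.natAbs with hqr | hqr
      · have h1 : m = r.natAbs := by omega
        calc m ^ k = r.natAbs ^ k := by rw [h1]
          _ ≤ wordLength KBG.S0 ((⇑φ)^[k] KBG.Y) := KBG.low_Y q r l φ hx' hy' hm k
          _ ≤ KBG.Nk φ k := le_max_right _ _
      · have h1 : m = q.natAbs := by omega
        calc m ^ k = q.natAbs ^ k := by rw [h1]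
          _ ≤ wordLength KBG.S0 ((⇑φ)^[k] KBG.X) := KBG.low_X q φ hx' k
          _ ≤ KBG.Nk φ k := le_max_left _ _
    have hNup : ∀ k : ℕ, KBG.Nk φ k ≤ (1 + L * k) * m ^ k := by
      intro k
      have hqk : q.natAbs ^ k ≤ m ^ k := Nat.pow_le_pow_left (le_max_left _ _) k
      have hrk : r.natAbs ^ k ≤ m ^ k := Nat.pow_le_pow_left (le_max_right _ _) k
      have he : (1 + L * k) * m ^ k = m ^ k + L * k * m ^ k := by ring
      apply max_le
      · have := KBG.up_X q φ hx' k
        calc wordLength KBG.S0 ((⇑φ)^[k] KBG.X) ≤ q.natAbs ^ k := this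
          _ ≤ (1 + L * k) * m ^ k := by omega
      · have := KBG.up_Y q r l φ hx' hy' hm k
        calc wordLength KBG.S0 ((⇑φ)^[k] KBG.Y) ≤ r.natAbs ^ k + L * k * m ^ k := this
          _ ≤ (1 + L * k) * m ^ k := by omega
    set D : ℕ := KBG.Ac S * KBG.Bc S with hDdef
    have hA : 1 ≤ KBG.Ac S := KBG.hA1 S hS
    have hB : 1 ≤ KBG.Bc S := KBG.hB1 S hS
    have hD1 : 1 ≤ D := by
      calc 1 = 1 * 1 := rfl
        _ ≤ KBG.Ac S * KBG.Bc S := Nat.mul_le_mul hA hB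
    have hLklow : ∀ k : ℕ, m ^ k ≤ D * Lk S ⇑φ k := by
      intro k
      calc m ^ k ≤ KBG.Nk φ k := hmN k
        _ ≤ KBG.Bc S * (Lk S ⇑φ k * KBG.Ac S) := KBG.low_chain φ S hS k
        _ = D * Lk S ⇑φ k := by rw [hDdef]; ring
    have hLkup : ∀ k : ℕ, Lk S ⇑φ k ≤ D * ((1 + L * k) * m ^ k) := by
      intro k
      calc Lk S ⇑φ k ≤ KBG.Ac S * (KBG.Nk φ k * KBG.Bc S) := KBG.up_chain φ S hS k
        _ ≤ KBG.Ac S * ((1 + L * k) * m ^ k * KBG.Bc S) := by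
            exact Nat.mul_le_mul_left _ (Nat.mul_le_mul_right _ (hNup k))
        _ = D * ((1 + L * k) * m ^ k) := by rw [hDdef]; ring
    have hLk1 : ∀ k : ℕ, 1 ≤ Lk S ⇑φ k := by
      intro k
      have h := hLklow k
      have h1 : 1 ≤ m ^ k := Nat.one_le_pow _ _ (by omega)
      rcases Nat.eq_zero_or_pos (Lk S ⇑φ k) with h2 | h2
      · rw [h2, Nat.mul_zero] at h; omega
      · exact h2
    -- real sequence
    set u : ℕ → ℝ := fun k => Real.log (Lk S ⇑φ k) with hudef
    have hLkpos : ∀ k : ℕ, (0:ℝ) < (Lk S ⇑φ k : ℝ) := by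
      intro k
      exact_mod_cast hLk1 k
    have hsub : Subadditive u := by
      intro a b
      have hmul := KBG.Lk_submult φ S hS a b
      have hcast : ((Lk S ⇑φ (a + b) : ℕ) : ℝ) ≤ ((Lk S ⇑φ a : ℕ) : ℝ) * ((Lk S ⇑φ b : ℕ) : ℝ) := by
        exact_mod_cast hmul
      calc u (a + b) ≤ Real.log (((Lk S ⇑φ a : ℕ) : ℝ) * ((Lk S ⇑φ b : ℕ) : ℝ)) := by
            apply (Real.log_le_log_iff (hLkpos _) (mul_pos (hLkpos a) (hLkpos b))).mpr hcast
        _ = u a + u b := Real.log_mul (hLkpos a).ne' (hLkpos b).ne'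
    set c : ℝ := Real.log D with hcdef
    have hc0 : 0 ≤ c := Real.log_nonneg (by exact_mod_cast hD1)
    have hDpos : (0:ℝ) < (D:ℝ) := by
      have : (1:ℝ) ≤ (D:ℝ) := by exact_mod_cast hD1
      linarith
    have hlowR : ∀ k : ℕ, (k:ℝ) * Real.log m - c ≤ u k := by
      intro k
      have h : ((m:ℝ)) ^ k ≤ (D:ℝ) * (Lk S ⇑φ k : ℝ) := by exact_mod_cast hLklow k
      have hlog := (Real.log_le_log_iff (pow_pos hmR0 k) (mul_pos hDpos (hLkpos k))).mpr h
      rw [Real.log_pow, Real.log_mul hDpos.ne' (hLkpos k).ne'] at hlog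
      rw [hudef]
      simp only []
      linarith
    have hupR : ∀ k : ℕ, u k ≤ c + (Real.log (1 + (L:ℝ) * k) + (k:ℝ) * Real.log m) := by
      intro k
      have hcast : ((Lk S ⇑φ k : ℕ) : ℝ) ≤ (D:ℝ) * ((1 + (L:ℝ) * k) * (m:ℝ) ^ k) := by
        have := hLkup k
        have h2 : ((Lk S ⇑φ k : ℕ) : ℝ) ≤ ((D * ((1 + L * k) * m ^ k) : ℕ) : ℝ) := by
          exact_mod_cast this
        calc ((Lk S ⇑φ k : ℕ) : ℝ) ≤ ((D * ((1 + L * k) * m ^ k) : ℕ) : ℝ) := h2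
          _ = (D:ℝ) * ((1 + (L:ℝ) * k) * (m:ℝ) ^ k) := by push_cast; ring
      have h1pos : (0:ℝ) < 1 + (L:ℝ) * k := by positivity
      have hlog := (Real.log_le_log_iff (hLkpos k)
        (mul_pos hDpos (mul_pos h1pos (pow_pos hmR0 k)))).mpr hcast
      rw [Real.log_mul hDpos.ne' (mul_pos h1pos (pow_pos hmR0 k)).ne',
        Real.log_mul h1pos.ne' (pow_pos hmR0 k).ne', Real.log_pow] at hlog
      exact hlog
    -- the log term tendsto
    have hlog1 : Tendsto (fun n : ℕ => Real.log (1 + (L:ℝ) * n) / n) atTop (𝓝 0) := by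
      by_cases hl0 : L = 0
      · simp only [hl0, Nat.cast_zero, zero_mul, add_zero, Real.log_one, zero_div]
        exact tendsto_const_nhds
      · have hLpos : (0:ℝ) < (L:ℝ) := by
          have : 1 ≤ L := Nat.one_le_iff_ne_zero.mpr hl0
          exact_mod_cast Nat.lt_of_lt_of_le Nat.zero_lt_one this
        have hf : Tendsto (fun n : ℕ => 1 + (L:ℝ) * n) atTop atTop := by
          apply tendsto_atTop_add_const_left
          exact Tendsto.const_mul_atTop hLpos tendsto_natCast_atTop_atTop
        have h1 : Tendsto (fun n : ℕ => Real.log (1 + (L:ℝ) * n) / (1 + (L:ℝ) * n))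
            atTop (𝓝 0) :=
          (Real.isLittleO_log_id_atTop.tendsto_div_nhds_zero).comp hf
        have h2 : Tendsto (fun n : ℕ => (1 + (L:ℝ) * n) / n) atTop (𝓝 ((L:ℝ))) := by
          have h3 : Tendsto (fun n : ℕ => 1 / (n:ℝ) + (L:ℝ)) atTop (𝓝 (0 + (L:ℝ))) :=
            tendsto_one_div_atTop_nhds_zero_nat.add tendsto_const_nhds
          rw [zero_add] at h3
          apply h3.congr'
          filter_upwards [eventually_ge_atTop 1] with n hn
          have hn0 : (n:ℝ) ≠ 0 := by
            have : (1:ℝ) ≤ (n:ℝ) := by exact_mod_cast hn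
            linarith
          field_simp
        have hmul := h1.mul h2
        rw [zero_mul] at hmul
        apply hmul.congr'
        filter_upwards [eventually_ge_atTop 1] with n hn
        have hn1 : (0:ℝ) < 1 + (L:ℝ) * n := by positivity
        have hn0 : (n:ℝ) ≠ 0 := by
          have : (1:ℝ) ≤ (n:ℝ) := by exact_mod_cast hn
          linarith
        field_simp
    have hdiv0 : Tendsto (fun n : ℕ => c / (n:ℝ)) atTop (𝓝 0) :=
      tendsto_const_div_atTop_nhds_zero_nat c
    have hlowseq : Tendsto (fun n : ℕ => Real.log m - c / n) atTop (𝓝 (Real.log m)) := by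
      have h4 := hdiv0.const_sub (Real.log m)
      rwa [sub_zero] at h4
    have hupseq : Tendsto (fun n : ℕ => (c / n + Real.log (1 + (L:ℝ) * n) / n) + Real.log m)
        atTop (𝓝 (Real.log m)) := by
      have h4 := (hdiv0.add hlog1).add_const (Real.log m)
      simpa using h4
    have htendsto : Tendsto (fun n : ℕ => u n / n) atTop (𝓝 (Real.log m)) := by
      apply tendsto_of_tendsto_of_tendsto_of_le_of_le' hlowseq hupseq
      · filter_upwards [eventually_ge_atTop 1] with n hn
        have hn0 : (0:ℝ) < (n:ℝ) := by exact_mod_cast Nat.lt_of_lt_of_le Nat.zero_lt_one hn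
        have h := hlowR n
        have h5 : ((n:ℝ) * Real.log m - c) / n ≤ u n / n := (div_le_div_iff_of_pos_right hn0).mpr h
        rwa [sub_div, mul_div_cancel_left₀ (Real.log m) hn0.ne'] at h5
      · filter_upwards [eventually_ge_atTop 1] with n hn
        have hn0 : (0:ℝ) < (n:ℝ) := by exact_mod_cast Nat.lt_of_lt_of_le Nat.zero_lt_one hn
        have h := hupR n
        have h5 : u n / n ≤ (c + (Real.log (1 + (L:ℝ) * n) + (n:ℝ) * Real.log m)) / n :=
          (div_le_div_iff_of_pos_right hn0).mpr h
        rwa [add_div, add_div, mul_div_cancel_left₀ (Real.log m) hn0.ne', ← add_assoc] at h5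
    have hbdd : BddBelow (Set.range fun n : ℕ => u n / n) := by
      refine ⟨min 0 (Real.log m - c), ?_⟩
      rintro x ⟨n, rfl⟩
      rcases Nat.eq_zero_or_pos n with h | h
      · subst h
        simp only [Nat.cast_zero, div_zero]
        exact min_le_left _ _
      · have hn0 : (0:ℝ) < (n:ℝ) := by exact_mod_cast h
        have h1 : ((n:ℝ) * Real.log m - c) / n ≤ u n / n := (div_le_div_iff_of_pos_right hn0).mpr (hlowR n)
        rw [sub_div, mul_div_cancel_left₀ (Real.log m) hn0.ne'] at h1
        have h2 : c / n ≤ c := by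
          apply div_le_self hc0
          exact_mod_cast h
        have := min_le_right 0 (Real.log m - c)
        simp only []
        linarith
    have hlim : hsub.lim = Real.log m :=
      tendsto_nhds_unique (hsub.tendsto_lim hbdd) htendsto
    -- assemble
    have hterm : ∀ k : ℕ+, ((Lk S ⇑φ (k:ℕ) : ℕ) : ℝ) ^ ((((k:ℕ)):ℝ))⁻¹
        = Real.exp (u (k:ℕ) / ((k:ℕ):ℝ)) := by
      intro k
      rw [Real.rpow_def_of_pos (hLkpos (k:ℕ)), div_eq_mul_inv]
    have hbdd' : BddBelow (Set.range fun k : ℕ+ => u (k:ℕ) / (((k:ℕ)):ℝ)) := by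
      refine ⟨Real.log m - c, ?_⟩
      rintro x ⟨k, rfl⟩
      have hk1 : (1:ℕ) ≤ (k:ℕ) := k.one_le
      have hn0 : (0:ℝ) < ((k:ℕ):ℝ) := by exact_mod_cast k.pos
      have h1 : (((k:ℕ):ℝ) * Real.log m - c) / (k:ℕ) ≤ u (k:ℕ) / (k:ℕ) :=
        (div_le_div_iff_of_pos_right hn0).mpr (hlowR (k:ℕ))
      rw [sub_div, mul_div_cancel_left₀ (Real.log m) hn0.ne'] at h1
      have h2 : c / ((k:ℕ):ℝ) ≤ c := by
        apply div_le_self hc0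
        exact_mod_cast hk1
      simp only []
      linarith
    have hrange : Set.range (fun k : ℕ+ => u (k:ℕ) / (((k:ℕ)):ℝ))
        = (fun n : ℕ => u n / n) '' (Set.Ici 1) := by
      ext x
      constructor
      · rintro ⟨k, rfl⟩
        exact ⟨(k:ℕ), k.one_le, rfl⟩
      · rintro ⟨n, hn, rfl⟩
        exact ⟨⟨n, Nat.lt_of_lt_of_le Nat.zero_lt_one hn⟩, rfl⟩
    have hstep : GR S ⇑φ = Real.exp (⨅ k : ℕ+, u (k:ℕ) / (((k:ℕ)):ℝ)) := by
      have hfun : (fun k : ℕ+ => ((Lk S ⇑φ (k:ℕ) : ℕ) : ℝ) ^ ((((k:ℕ)):ℝ))⁻¹)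
          = fun k : ℕ+ => Real.exp (u (k:ℕ) / ((k:ℕ):ℝ)) := funext hterm
      show (⨅ k : ℕ+, ((Lk S ⇑φ (k:ℕ) : ℕ) : ℝ) ^ ((((k:ℕ)):ℝ))⁻¹) = _
      rw [hfun]
      exact (Real.exp_monotone.map_ciInf_of_continuousAt
        (Real.continuous_exp.continuousAt) hbdd').symm
    have hinf : (⨅ k : ℕ+, u (k:ℕ) / (((k:ℕ)):ℝ)) = Real.log m := by
      have h1 : (⨅ k : ℕ+, u (k:ℕ) / (((k:ℕ)):ℝ))
          = sInf (Set.range fun k : ℕ+ => u (k:ℕ) / (((k:ℕ)):ℝ)) := rfl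
      rw [h1, hrange]
      have h2 : hsub.lim = sInf ((fun n : ℕ => u n / n) '' (Set.Ici 1)) := by rw [Subadditive.lim]
      rw [← h2, hlim]
    rw [hstep, hinf, Real.exp_log hmR0]
    -- RHS
    have h1 : |(q : ℝ)| = (q.natAbs : ℝ) := by
      rw [Nat.cast_natAbs, Int.cast_abs]
    have h2 : |(r : ℝ)| = (r.natAbs : ℝ) := by
      rw [Nat.cast_natAbs, Int.cast_abs]
    rw [h1, h2, ← Nat.cast_max]
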